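/- arXiv:1510.08493 — 5 statements merged into one kernel-verified Lean document; each statement's English description precedes it below -/
import Mathlib

section
/- Let A_n be the two-generator Artin group with odd exponent n ≥ 3, let Δ = (aba⋯)_n, and in the index-two subgroup A_n' of even-length words set r = ab, s = ab⁻¹, t = a⁻¹b, q = ba. Then conjugation by Δ sends s ↦ s⁻¹, t ↦ t⁻¹, and r ↦ q; in particular Δ² is central in A_n. -/
/-- The alternating product `x y x y ⋯` of length `n`. -/
def altG {G : Type*} [Monoid G] : ℕ → G → G → G
  | 0, _, _ => 1
  | n + 1, x, y => x * altG n y x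

lemma map_altG {M N : Type*} [Monoid M] [Monoid N] (f : M →* N) :
    ∀ (n : ℕ) (x y : M), f (altG n x y) = altG n (f x) (f y)
  | 0, _, _ => by simp [altG]
  | n + 1, x, y => by simp [altG, map_altG f n]

/-- The braid relation of the two-generator Artin group with exponent `n`. -/
def braidRels (n : ℕ) : Set (FreeGroup Bool) :=
  {altG n (FreeGroup.of true) (FreeGroup.of false) *
    (altG n (FreeGroup.of false) (FreeGroup.of true))⁻¹}

/-- The two-generator Artin group `A_n`. -/
abbrev ArtinTwo (n : ℕ) := PresentedGroup (braidRels n)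

/-- The generator `a`. -/
def artinA (n : ℕ) : ArtinTwo n := PresentedGroup.of true

/-- The generator `b`. -/
def artinB (n : ℕ) : ArtinTwo n := PresentedGroup.of false

/-- The Garside element `Δ = (aba⋯)_n`. -/
def artinDelta (n : ℕ) : ArtinTwo n := altG n (artinA n) (artinB n)

/-- The homomorphism `A_n → ℤ/2` sending both generators to `1`. -/
def toZ2 (n : ℕ) : ArtinTwo n →* Multiplicative (ZMod 2) :=
  PresentedGroup.toGroup (f := fun _ => Multiplicative.ofAdd 1) (by
    intro r hr
    simp only [braidRels, Set.mem_singleton_iff] at hr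
    subst hr
    simp [map_altG])

/-- The index-two subgroup `A_n'` of even-length words. -/
def AnPrime (n : ℕ) : Subgroup (ArtinTwo n) := (toZ2 n).ker

lemma altG_succ {G : Type*} [Monoid G] :
    ∀ (n : ℕ) (x y : G), altG (n + 1) x y = altG n x y * (if n % 2 = 0 then x else y)
  | 0, x, y => by simp [altG]
  | n + 1, x, y => by
    have h : altG (n + 2) x y = x * altG (n + 1) y x := rfl
    rw [h, altG_succ n y x, show altG (n + 1) x y = x * altG n y x from rfl, mul_assoc]
    rcases Nat.even_or_odd n with he | ho
    · simp [Nat.even_iff.mp he, Nat.succ_mod_two_eq_one_iff.mpr (Nat.even_iff.mp he)]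
    · simp [Nat.odd_iff.mp ho, Nat.succ_mod_two_eq_zero_iff.mpr (Nat.odd_iff.mp ho)]

lemma artin_rel (n : ℕ) : altG n (artinA n) (artinB n) = altG n (artinB n) (artinA n) := by
  have h1 : ((QuotientGroup.mk' (Subgroup.normalClosure (braidRels n)))
      (altG n (FreeGroup.of true) (FreeGroup.of false) *
        (altG n (FreeGroup.of false) (FreeGroup.of true))⁻¹) : ArtinTwo n) = 1 := by
    rw [QuotientGroup.mk'_apply, QuotientGroup.eq_one_iff]
    exact Subgroup.subset_normalClosure (Set.mem_singleton _)
  rw [map_mul, map_inv, map_altG, map_altG, mul_inv_eq_one] at h1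
  exact h1

/-- for odd `n`, conjugation by `Δ` sends `s ↦ s⁻¹`, `t ↦ t⁻¹`, `r ↦ q`,
and in particular `Δ²` is central. -/
theorem artin_odd_delta_conjugation (n : ℕ) (hodd : Odd n) (hn : 3 ≤ n) :
    (artinDelta n)⁻¹ * (artinA n * (artinB n)⁻¹) * artinDelta n
        = (artinA n * (artinB n)⁻¹)⁻¹ ∧
    (artinDelta n)⁻¹ * ((artinA n)⁻¹ * artinB n) * artinDelta n
        = ((artinA n)⁻¹ * artinB n)⁻¹ ∧
    (artinDelta n)⁻¹ * (artinA n * artinB n) * artinDelta n = artinB n * artinA n ∧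
    ∀ g : ArtinTwo n, (artinDelta n) ^ 2 * g = g * (artinDelta n) ^ 2 := by
  have hmod : n % 2 = 1 := Nat.odd_iff.mp hodd
  have rel : altG n (artinA n) (artinB n) = altG n (artinB n) (artinA n) := artin_rel n
  have hab : artinA n * artinDelta n = artinDelta n * artinB n := by
    calc artinA n * artinDelta n
        = artinA n * altG n (artinB n) (artinA n) := by rw [artinDelta, rel]
      _ = altG (n + 1) (artinA n) (artinB n) := rfl
      _ = altG n (artinA n) (artinB n) * artinB n := by rw [altG_succ, hmod]; simp
      _ = artinDelta n * artinB n := rfl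
  have hba : artinB n * artinDelta n = artinDelta n * artinA n := by
    calc artinB n * artinDelta n
        = altG (n + 1) (artinB n) (artinA n) := rfl
      _ = altG n (artinB n) (artinA n) * artinA n := by rw [altG_succ, hmod]; simp
      _ = artinDelta n * artinA n := by rw [artinDelta, rel]
  have hca : (artinDelta n)⁻¹ * artinA n * artinDelta n = artinB n := by
    rw [mul_assoc, hab]; group
  have hcb : (artinDelta n)⁻¹ * artinB n * artinDelta n = artinA n := by
    rw [mul_assoc, hba]; group
  have comma : artinDelta n ^ 2 * artinA n = artinA n * artinDelta n ^ 2 := by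
    rw [pow_two, mul_assoc, ← hba, ← mul_assoc, ← hab, mul_assoc]
  have commb : artinDelta n ^ 2 * artinB n = artinB n * artinDelta n ^ 2 := by
    rw [pow_two, mul_assoc, ← hab, ← mul_assoc, ← hba, mul_assoc]
  refine ⟨?_, ?_, ?_, ?_⟩
  · calc (artinDelta n)⁻¹ * (artinA n * (artinB n)⁻¹) * artinDelta n
        = ((artinDelta n)⁻¹ * artinA n * artinDelta n) *
          ((artinDelta n)⁻¹ * artinB n * artinDelta n)⁻¹ := by group
      _ = (artinA n * (artinB n)⁻¹)⁻¹ := by rw [hca, hcb]; group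
  · calc (artinDelta n)⁻¹ * ((artinA n)⁻¹ * artinB n) * artinDelta n
        = ((artinDelta n)⁻¹ * artinA n * artinDelta n)⁻¹ *
          ((artinDelta n)⁻¹ * artinB n * artinDelta n) := by group
      _ = ((artinA n)⁻¹ * artinB n)⁻¹ := by rw [hca, hcb]; group
  · calc (artinDelta n)⁻¹ * (artinA n * artinB n) * artinDelta n
        = ((artinDelta n)⁻¹ * artinA n * artinDelta n) *
          ((artinDelta n)⁻¹ * artinB n * artinDelta n) := by group
      _ = artinB n * artinA n := by rw [hca, hcb]
  · intro g
    have key : Commute (artinDelta n ^ 2) g := by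
      induction g using QuotientGroup.induction_on with
      | H w =>
        induction w using FreeGroup.induction_on with
        | C1 => exact Commute.one_right _
        | of x =>
          cases x
          · exact commb
          · exact comma
        | inv_of x hx => exact hx.inv_right
        | mul x y hx hy =>
          have : (QuotientGroup.mk (x * y) : ArtinTwo n)
              = QuotientGroup.mk x * QuotientGroup.mk y := rfl
          rw [this]
          exact hx.mul_right hy
    exact key
end

section
/- Let A_n be the two-generator Artin group with odd exponent n ≥ 3 and Δ = (aba⋯)_n. With r = ab, s = ab⁻¹, t = a⁻¹b, the word φ(s,t,r) = s⁻¹ · ∏_{i=(n-3)/2}^{0} r⁻ⁱ t⁻¹ rⁱ (product taken with decreasing index i) satisfies b^n = φ(s,t,r) · Δ. Moreover, the total exponent of r in φ is zero. -/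
/-- The word `φ(s,t,r) = s⁻¹ ∏_{i=(n-3)/2}^{0} r⁻ⁱ t⁻¹ rⁱ` (decreasing index), as an element
of the free group on the letters `0 ↦ s`, `1 ↦ t`, `2 ↦ r`. -/
def phiWord (n : ℕ) : FreeGroup (Fin 3) :=
  (FreeGroup.of 0)⁻¹ *
    (((List.range ((n - 1) / 2)).reverse.map
      (fun i => (FreeGroup.of 2 ^ i)⁻¹ * (FreeGroup.of 1)⁻¹ * FreeGroup.of 2 ^ i)).prod)

/-- Evaluation of words in `s, t, r` in the Artin group `A_n`, where
`s = ab⁻¹`, `t = a⁻¹b`, `r = ab`. -/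
def evalSTR (n : ℕ) : FreeGroup (Fin 3) →* ArtinTwo n :=
  FreeGroup.lift
    ![artinA n * (artinB n)⁻¹, (artinA n)⁻¹ * artinB n, artinA n * artinB n]

/-- The total exponent of the letter `r` in a word in `s, t, r`. -/
def expR : FreeGroup (Fin 3) →* Multiplicative ℤ :=
  FreeGroup.lift (fun i => Multiplicative.ofAdd (if i = 2 then (1 : ℤ) else 0))

section aux
variable {G : Type*} [Group G]

lemma altG_two_add (m : ℕ) (x y : G) : altG (m + 2) x y = x * y * altG m x y := by
  simp [altG, mul_assoc]

lemma altG_odd : ∀ (k : ℕ) (x y : G), altG (2 * k + 1) x y = (x * y) ^ k * x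
  | 0, x, y => by simp [altG]
  | k + 1, x, y => by
    have h : 2 * (k + 1) + 1 = (2 * k + 1) + 2 := by ring
    rw [h, altG_two_add, altG_odd k, pow_succ']
    group

lemma conj_pow_aux (x y : G) (m : ℕ) : x * (y * x) ^ m = (x * y) ^ m * x := by
  induction m with
  | zero => simp
  | succ m ih => rw [pow_succ, ← mul_assoc, ih, pow_succ]; group

lemma conj_pow_aux2 (x y : G) (m : ℕ) :
    ((y * x) ^ m)⁻¹ * x⁻¹ = ((y * x) ^ (m + 1))⁻¹ * y := by
  rw [pow_succ', mul_inv_rev, mul_inv_rev, mul_assoc, mul_assoc, inv_mul_cancel, mul_one]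

end aux

/-- for odd `n`, `b^n = φ(s,t,r) Δ` and the total exponent of `r` in `φ` is zero. -/
theorem artin_odd_bn_formula (n : ℕ) (hodd : Odd n) (hn : 3 ≤ n) :
    (artinB n) ^ n = evalSTR n (phiWord n) * artinDelta n ∧
      Multiplicative.toAdd (expR (phiWord n)) = 0 := by
  obtain ⟨k, hk⟩ := hodd
  set a := artinA n with ha
  set b := artinB n with hb
  set Δ := artinDelta n with hΔ
  have hk' : (n - 1) / 2 = k := by omega
  have hΔ1 : Δ = (a * b) ^ k * a := by
    rw [hΔ, artinDelta, ← altG_odd, ← hk]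
  have hΔ2 : Δ = (b * a) ^ k * b := by
    rw [hΔ, artinDelta, artin_rel, ← altG_odd, ← hk]
  have hDa : Δ * a = b * Δ := by
    calc Δ * a = (b * a) ^ k * b * a := by rw [← hΔ2]
    _ = b * (a * b) ^ k * a := by rw [conj_pow_aux]
    _ = b * Δ := by rw [hΔ1]; group
  have hDb : Δ * b = a * Δ := by
    calc Δ * b = (a * b) ^ k * a * b := by rw [← hΔ1]
    _ = a * (b * a) ^ k * b := by rw [conj_pow_aux]
    _ = a * Δ := by rw [hΔ2]; group
  have key1 : Δ * (b * a) = (a * b) * Δ := by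
    calc Δ * (b * a) = (Δ * b) * a := by group
    _ = a * (Δ * a) := by rw [hDb]; group
    _ = a * (b * Δ) := by rw [hDa]
    _ = (a * b) * Δ := by group
  have key2 : ∀ m : ℕ, Δ * (b * a) ^ m = (a * b) ^ m * Δ :=
    fun m => (SemiconjBy.pow_right key1 m :)
  have hbinv : b⁻¹ * Δ = Δ * a⁻¹ := by
    calc b⁻¹ * Δ = b⁻¹ * (Δ * a) * a⁻¹ := by group
    _ = b⁻¹ * (b * Δ) * a⁻¹ := by rw [hDa]
    _ = Δ * a⁻¹ := by group
  have key2inv : ∀ m : ℕ, ((a * b) ^ m)⁻¹ * Δ = Δ * ((b * a) ^ m)⁻¹ := by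
    intro m
    calc ((a * b) ^ m)⁻¹ * Δ
        = ((a * b) ^ m)⁻¹ * (Δ * (b * a) ^ m) * ((b * a) ^ m)⁻¹ := by group
    _ = ((a * b) ^ m)⁻¹ * ((a * b) ^ m * Δ) * ((b * a) ^ m)⁻¹ := by rw [key2]
    _ = Δ * ((b * a) ^ m)⁻¹ := by group
  set g : ℕ → ArtinTwo n := fun i => ((a * b) ^ i)⁻¹ * (b⁻¹ * a) * (a * b) ^ i with hg
  have main : ∀ m : ℕ,
      ((List.range m).reverse.map g).prod * Δ = Δ * ((b * a) ^ m)⁻¹ * b ^ (2 * m) := by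
    intro m
    induction m with
    | zero => simp
    | succ m ih =>
      rw [List.range_succ, List.reverse_append]
      simp only [List.reverse_singleton, List.singleton_append, List.map_cons, List.prod_cons]
      calc g m * ((List.range m).reverse.map g).prod * Δ
          = g m * (((List.range m).reverse.map g).prod * Δ) := by group
        _ = g m * (Δ * ((b * a) ^ m)⁻¹ * b ^ (2 * m)) := by rw [ih]
        _ = ((a * b) ^ m)⁻¹ * (b⁻¹ * a) * ((a * b) ^ m * Δ) * (((b * a) ^ m)⁻¹ * b ^ (2 * m))
            := by rw [hg]; group
        _ = ((a * b) ^ m)⁻¹ * (b⁻¹ * a) * (Δ * (b * a) ^ m) * (((b * a) ^ m)⁻¹ * b ^ (2 * m))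
            := by rw [← key2]
        _ = ((a * b) ^ m)⁻¹ * (b⁻¹ * (a * Δ)) * b ^ (2 * m) := by group
        _ = ((a * b) ^ m)⁻¹ * (b⁻¹ * (Δ * b)) * b ^ (2 * m) := by rw [← hDb]
        _ = ((a * b) ^ m)⁻¹ * ((b⁻¹ * Δ) * b ^ (2 * m + 1)) := by group
        _ = ((a * b) ^ m)⁻¹ * ((Δ * a⁻¹) * b ^ (2 * m + 1)) := by rw [hbinv]
        _ = (((a * b) ^ m)⁻¹ * Δ) * (a⁻¹ * b ^ (2 * m + 1)) := by group
        _ = (Δ * ((b * a) ^ m)⁻¹) * (a⁻¹ * b ^ (2 * m + 1)) := by rw [key2inv]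
        _ = Δ * ((((b * a) ^ m)⁻¹ * a⁻¹) * b ^ (2 * m + 1)) := by group
        _ = Δ * ((((b * a) ^ (m + 1))⁻¹ * b) * b ^ (2 * m + 1)) := by rw [conj_pow_aux2 a b m]
        _ = Δ * ((b * a) ^ (m + 1))⁻¹ * b ^ (2 * (m + 1)) := by group
  have hainv : a⁻¹ * Δ = Δ * b⁻¹ := by
    calc a⁻¹ * Δ = a⁻¹ * (Δ * b) * b⁻¹ := by group
    _ = a⁻¹ * (a * Δ) * b⁻¹ := by rw [hDb]
    _ = Δ * b⁻¹ := by group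
  have evalof0 : evalSTR n (FreeGroup.of 0) = a * b⁻¹ := by
    simp [evalSTR, ha, hb]
  have evalof1 : evalSTR n (FreeGroup.of 1) = a⁻¹ * b := by
    simp [evalSTR, ha, hb]
  have evalof2 : evalSTR n (FreeGroup.of 2) = a * b := by
    simp [evalSTR, ha, hb]
  have hmap : ∀ i : ℕ, evalSTR n
      ((FreeGroup.of 2 ^ i)⁻¹ * (FreeGroup.of 1)⁻¹ * FreeGroup.of 2 ^ i) = g i := by
    intro i
    rw [map_mul, map_mul, map_inv, map_inv, map_pow, evalof1, evalof2, hg]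
    simp [mul_inv_rev]
  have evalφ : evalSTR n (phiWord n)
      = (a * b⁻¹)⁻¹ * ((List.range k).reverse.map g).prod := by
    rw [phiWord, hk', map_mul, map_inv, evalof0, MonoidHom.map_list_prod, List.map_map]
    simp only [Function.comp_def]
    rw [List.map_congr_left (l := (List.range k).reverse) fun i _ => hmap i]
  constructor
  · rw [evalφ]
    symm
    calc (a * b⁻¹)⁻¹ * ((List.range k).reverse.map g).prod * Δ
        = (a * b⁻¹)⁻¹ * (((List.range k).reverse.map g).prod * Δ) := by group
      _ = (a * b⁻¹)⁻¹ * (Δ * ((b * a) ^ k)⁻¹ * b ^ (2 * k)) := by rw [main k]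
      _ = b * ((a⁻¹ * Δ) * (((b * a) ^ k)⁻¹ * b ^ (2 * k))) := by group
      _ = b * ((Δ * b⁻¹) * (((b * a) ^ k)⁻¹ * b ^ (2 * k))) := by rw [hainv]
      _ = b * (Δ * (((b * a) ^ k * b)⁻¹ * b ^ (2 * k))) := by group
      _ = b * (Δ * (Δ⁻¹ * b ^ (2 * k))) := by rw [← hΔ2]
      _ = b ^ (2 * k + 1) := by group
      _ = b ^ n := (congrArg (b ^ ·) hk).symm
  · have h2 : expR (phiWord n) = 1 := by
      rw [phiWord, map_mul, map_inv]
      have e0 : expR (FreeGroup.of 0) = 1 := by simp [expR]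
      rw [e0, inv_one, one_mul, MonoidHom.map_list_prod, List.map_map]
      apply List.prod_eq_one
      intro x hx
      simp only [List.mem_map, Function.comp_def] at hx
      obtain ⟨i, -, rfl⟩ := hx
      rw [map_mul, map_mul, map_inv, map_inv, map_pow]
      have e1 : expR (FreeGroup.of 1) = 1 := by simp [expR]
      rw [e1, inv_one, mul_one]
      exact inv_mul_cancel _
    rw [h2]
    rfl
end

section
/- Let G be a finitely generated group, z ∈ G a central element, H a finite-index normal subgroup of G, and h ∈ H with h ∈ z[G,G]. Then for any homomorphism ρ: H → ℤ with ρ nontrivial on ⟨z⟩ ∩ H, there exist a positive integer m and g ∈ G such that g⁻¹ h^m g ∈ H and ρ(g⁻¹ h^m g) ≠ 0. -/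
/-- Surface Lemma: let `G` be a finitely generated group, `z ∈ G` central,
`H ⊴ G` of finite index, and `h ∈ H` with `h z⁻¹ ∈ [G,G]`. Then for any homomorphism
`ρ : H → ℤ` nontrivial on `⟨z⟩ ∩ H` there are `m > 0` and `g ∈ G` with `g⁻¹ h^m g ∈ H`
and `ρ(g⁻¹ h^m g) ≠ 0`. -/
theorem surface_lemma {G : Type*} [Group G] (hfg : Group.FG G)
    (z : G) (hz : z ∈ Subgroup.center G)
    (H : Subgroup G) [H.Normal] (hfi : H.FiniteIndex)
    (h : G) (hhH : h ∈ H) (hcomm : h * z⁻¹ ∈ commutator G)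
    (ρ : H →* Multiplicative ℤ)
    (hρ : ∃ (m : ℤ) (hm : z ^ m ∈ H), ρ ⟨z ^ m, hm⟩ ≠ 1) :
    ∃ m : ℕ, 0 < m ∧ ∃ (g : G) (hmem : g⁻¹ * h ^ m * g ∈ H),
      ρ ⟨g⁻¹ * h ^ m * g, hmem⟩ ≠ 1 := by
  classical
  letI := H.fintypeQuotientOfFiniteIndex
  -- central elements conjugate trivially
  have hzkey : ∀ (k : ℕ) (g₀ : G), g₀⁻¹ * z ^ k * g₀ ∈ H → g₀⁻¹ * z ^ k * g₀ = z ^ k := by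
    intro k g₀ _
    have hc : z ^ k ∈ Subgroup.center G := Subgroup.pow_mem _ hz k
    rw [Subgroup.mem_center_iff] at hc
    rw [hc g₀⁻¹, mul_assoc, inv_mul_cancel, mul_one]
  have hzind : z ^ H.index ∈ H := MonoidHom.transfer_eq_pow_aux z hzkey
  have h1 : MonoidHom.transfer ρ z = ρ ⟨z ^ H.index, hzind⟩ :=
    MonoidHom.transfer_eq_pow ρ z hzkey
  -- ρ (z ^ index) ≠ 1
  obtain ⟨m, hm, hρm⟩ := hρ
  have hne : ρ ⟨z ^ H.index, hzind⟩ ≠ 1 := by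
    intro hb
    apply hρm
    have key : (⟨z ^ m, hm⟩ : H) ^ (H.index : ℤ) = (⟨z ^ H.index, hzind⟩ : H) ^ m := by
      ext
      push_cast
      rw [← zpow_natCast z H.index, ← zpow_mul, ← zpow_mul, mul_comm]
    have := congrArg ρ key
    rw [map_zpow, map_zpow, hb, one_zpow] at this
    have h2 : (H.index : ℤ) • Multiplicative.toAdd (ρ ⟨z ^ m, hm⟩) = 0 := by
      simpa using congrArg Multiplicative.toAdd this
    rw [smul_eq_zero] at h2
    rcases h2 with h2 | h2
    · exact absurd (by exact_mod_cast h2) hfi.index_ne_zero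
    · simpa using h2
  have hTz : MonoidHom.transfer ρ z ≠ 1 := h1 ▸ hne
  -- transfer kills commutators, so transfer h = transfer z ≠ 1
  have hker : MonoidHom.transfer ρ (h * z⁻¹) = 1 :=
    Abelianization.commutator_subset_ker (MonoidHom.transfer ρ) hcomm
  have hTh : MonoidHom.transfer ρ h ≠ 1 := by
    intro hT
    apply hTz
    have : MonoidHom.transfer ρ h = MonoidHom.transfer ρ (h * z⁻¹) * MonoidHom.transfer ρ z := by
      rw [← map_mul, inv_mul_cancel_right]
    rw [hT, hker, one_mul] at this
    exact this.symm
  -- expand transfer h as a product over orbits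
  letI : Fintype (Quotient (MulAction.orbitRel (Subgroup.zpowers h) (G ⧸ H))) :=
    Quotient.fintype _
  rw [MonoidHom.transfer_eq_prod_quotient_orbitRel_zpowers_quot] at hTh
  obtain ⟨q, _, hq⟩ := Finset.exists_ne_one_of_prod_ne_one hTh
  set k := Function.minimalPeriod (h • ·) q.out with hk
  refine ⟨k, ?_, q.out.out, QuotientGroup.out_conj_pow_minimalPeriod_mem H h q.out, hq⟩
  rcases Nat.eq_zero_or_pos k with h0 | hpos
  swap
  · exact hpos
  · exfalso
    apply hq
    have : (⟨q.out.out⁻¹ * h ^ k * q.out.out,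
        QuotientGroup.out_conj_pow_minimalPeriod_mem H h q.out⟩ : H) = 1 := by
      ext
      simp [h0]
    rw [this, map_one]
end

section
/- Let n ≥ 4 be even and let A_n = ⟨a, b | (ab)^{n/2} = (ba)^{n/2} shifted, i.e., the Artin relation of length n⟩ with central element z = Δ = (ab)^{n/2}. Let H be a finite-index normal subgroup of A_n and ρ: H → ℤ a homomorphism with ρ(⟨z⟩ ∩ H) ≠ {0}. Then there exist a positive integer m and g ∈ A_n such that at least one of g⁻¹ a^m g and g⁻¹ b^m g lies in H and has nonzero image under ρ. -/
/- ### Auxiliary lemmas -/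

lemma altG_one' {G : Type*} [Monoid G] : ∀ n : ℕ, altG n (1 : G) 1 = 1
  | 0 => rfl
  | n + 1 => by simp [altG, altG_one' n]

lemma altG_two_mul {G : Type*} [Monoid G] : ∀ (k : ℕ) (x y : G), altG (2 * k) x y = (x * y) ^ k
  | 0, x, y => by simp [altG]
  | k + 1, x, y => by
    have h : 2 * (k + 1) = (2 * k + 1) + 1 := by ring
    rw [h]
    show x * (y * altG (2 * k) x y) = _
    rw [altG_two_mul k x y, ← mul_assoc, pow_succ']

/-- The braid relation in `ArtinTwo n`. -/
lemma altG_of_eq {G : Type*} [Monoid G] {n s : ℕ} (h : n = 2 * s) (x y : G) :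
    altG n x y = (x * y) ^ s := by subst h; exact altG_two_mul s x y

/-- `Δ` is central in `ArtinTwo n` when `n` is even. -/
lemma artinDelta_central (n : ℕ) (heven : Even n) (g : ArtinTwo n) :
    Commute (artinDelta n) g := by
  obtain ⟨s, hs⟩ := heven
  have hn2 : n = 2 * s := by omega
  set a := artinA n
  set b := artinB n
  have hrel : (a * b) ^ s = (b * a) ^ s := by
    have := artin_rel n
    rwa [altG_of_eq hn2, altG_of_eq hn2] at this
  have hΔ : artinDelta n = (a * b) ^ s := by
    rw [artinDelta, altG_of_eq hn2]
  have hsemi : ∀ (x y : ArtinTwo n) (t : ℕ), (x * y) ^ t * x = x * (y * x) ^ t := by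
    intro x y t
    have : SemiconjBy x ((y * x) ^ t) ((x * y) ^ t) := by
      apply SemiconjBy.pow_right
      show x * (y * x) = (x * y) * x
      group
    exact this.symm
  have ha : Commute (artinDelta n) a := by
    show artinDelta n * a = a * artinDelta n
    rw [hΔ, hsemi a b s, ← hrel]
  have hb : Commute (artinDelta n) b := by
    show artinDelta n * b = b * artinDelta n
    rw [hΔ, hrel, hsemi b a s, ← hrel]
  have : g ∈ Subgroup.centralizer {artinDelta n} := by
    apply PresentedGroup.generated_by (braidRels n)
    intro j
    rcases j with _ | _
    · intro x hx
      rcases hx with rfl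
      exact hb
    · intro x hx
      rcases hx with rfl
      exact ha
  exact ((Subgroup.mem_centralizer_iff.mp this) _ rfl)

/-- In `Multiplicative ℤ`, powers detect triviality. -/
lemma multiplicativeInt_pow_eq_one {x : Multiplicative ℤ} {k : ℕ} (hk : k ≠ 0)
    (h : x ^ k = 1) : x = 1 := by
  have : (k : ℤ) • x.toAdd = 0 := by
    have := congrArg Multiplicative.toAdd h
    simpa [toAdd_pow] using this
  rcases smul_eq_zero.mp this with h' | h'
  · exact absurd (by exact_mod_cast h') hk
  · simpa using congrArg Multiplicative.ofAdd h'

/-- Minimal period of left translation on a finite quotient is positive. -/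
lemma minPeriod_pos {G : Type*} [Group G] (H : Subgroup G) [H.FiniteIndex]
    (g : G) (q : G ⧸ H) : 0 < Function.minimalPeriod (g • ·) q := by
  letI := H.fintypeQuotientOfFiniteIndex
  set e : Equiv.Perm (G ⧸ H) := MulAction.toPermHom G (G ⧸ H) g with he
  have hord : 0 < orderOf e := orderOf_pos e
  have hfix : (g ^ orderOf e) • q = q := by
    have h1 : MulAction.toPermHom G (G ⧸ H) (g ^ orderOf e) = 1 := by
      rw [map_pow, ← he, pow_orderOf_eq_one]
    calc (g ^ orderOf e) • q = (MulAction.toPermHom G (G ⧸ H) (g ^ orderOf e)) q := rfl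
      _ = q := by rw [h1]; rfl
  have hper : Function.IsPeriodicPt (g • ·) (orderOf e) q := by
    show Function.IsFixedPt _ q
    show (g • · : G ⧸ H → G ⧸ H)^[orderOf e] q = q
    rw [smul_iterate_apply]
    exact hfix
  exact hper.minimalPeriod_pos hord

/-- for even `n ≥ 4`, `z = Δ` central, `H ⊴ A_n` of finite index, and
`ρ : H → ℤ` nontrivial on `⟨z⟩ ∩ H`, there are `m > 0` and `g ∈ A_n` such that at least
one of `g⁻¹ a^m g`, `g⁻¹ b^m g` lies in `H` and has nonzero image under `ρ`. -/
theorem artin_even_conjugate_generator_power (n : ℕ) (heven : Even n) (hn : 4 ≤ n)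
    (H : Subgroup (ArtinTwo n)) [H.Normal] (hfi : H.FiniteIndex)
    (ρ : H →* Multiplicative ℤ)
    (hρ : ∃ (m : ℤ) (hm : (artinDelta n) ^ m ∈ H), ρ ⟨(artinDelta n) ^ m, hm⟩ ≠ 1) :
    ∃ m : ℕ, 0 < m ∧ ∃ g : ArtinTwo n,
      (∃ hmem : g⁻¹ * (artinA n) ^ m * g ∈ H, ρ ⟨g⁻¹ * (artinA n) ^ m * g, hmem⟩ ≠ 1) ∨
      (∃ hmem : g⁻¹ * (artinB n) ^ m * g ∈ H, ρ ⟨g⁻¹ * (artinB n) ^ m * g, hmem⟩ ≠ 1) := by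
  by_contra hcon
  push_neg at hcon
  haveI : H.FiniteIndex := hfi
  classical
  letI := H.fintypeQuotientOfFiniteIndex
  set T : ArtinTwo n →* Multiplicative ℤ := MonoidHom.transfer ρ with hT
  have key : ∀ g : ArtinTwo n,
      (∀ (m : ℕ), 0 < m → ∀ (g₀ : ArtinTwo n) (hmem : g₀⁻¹ * g ^ m * g₀ ∈ H),
        ρ ⟨g₀⁻¹ * g ^ m * g₀, hmem⟩ = 1) → T g = 1 := by
    intro g hg
    haveI : Fintype (Quotient (MulAction.orbitRel (Subgroup.zpowers g) (ArtinTwo n ⧸ H))) :=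
      Fintype.ofFinite _
    rw [hT, MonoidHom.transfer_eq_prod_quotient_orbitRel_zpowers_quot]
    apply Finset.prod_eq_one
    intro q _
    exact hg _ (minPeriod_pos H g q.out) q.out.out _
  have hTa : T (artinA n) = 1 := key _ (fun m hm g₀ hmem => (hcon m hm g₀).1 hmem)
  have hTb : T (artinB n) = 1 := key _ (fun m hm g₀ hmem => (hcon m hm g₀).2 hmem)
  have hTΔ : T (artinDelta n) = 1 := by
    rw [artinDelta, map_altG, hTa, hTb, altG_one']
  obtain ⟨m, hm, hne⟩ := hρ
  have h1 : T ((artinDelta n) ^ m) = 1 := by rw [map_zpow, hTΔ, one_zpow]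
  have keyc : ∀ (k : ℕ) (g₀ : ArtinTwo n),
      g₀⁻¹ * ((artinDelta n) ^ m) ^ k * g₀ ∈ H →
      g₀⁻¹ * ((artinDelta n) ^ m) ^ k * g₀ = ((artinDelta n) ^ m) ^ k := by
    intro k g₀ _
    have hc : Commute (((artinDelta n) ^ m) ^ k) g₀ :=
      ((artinDelta_central n heven g₀).zpow_left m).pow_left k
    rw [mul_assoc, hc.eq, ← mul_assoc, inv_mul_cancel, one_mul]
  have h2 := MonoidHom.transfer_eq_pow ρ ((artinDelta n) ^ m) keyc
  rw [← hT] at h2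
  have h6 : ρ ⟨((artinDelta n) ^ m) ^ H.index,
      MonoidHom.transfer_eq_pow_aux ((artinDelta n) ^ m) keyc⟩ = 1 := h2 ▸ h1
  apply hne
  apply multiplicativeInt_pow_eq_one hfi.index_ne_zero
  rw [← map_pow]
  convert h6 using 2
  all_goals try (ext; simp)
end

section
/- In the braid group B₃ = ⟨a, b | aba = bab⟩, every element can be written as Δ⁻ᵏ φ(a,b) where Δ = aba, k ≥ 0, and φ is a positive word in a, b (a product of nonnegative powers of a and b). -/
section aux
open PresentedGroup

local notation "a" => artinA 3
local notation "b" => artinB 3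
local notation "Δ" => artinDelta 3
local notation "M" => Submonoid.closure ({artinA 3, artinB 3} : Set (ArtinTwo 3))

lemma braid_rel : a * (b * a) = b * (a * b) := by
  have : (PresentedGroup.mk (braidRels 3))
      (altG 3 (FreeGroup.of true) (FreeGroup.of false) *
        (altG 3 (FreeGroup.of false) (FreeGroup.of true))⁻¹) = 1 := by
    apply (QuotientGroup.eq_one_iff _).mpr
    exact Subgroup.subset_normalClosure rfl
  rw [map_mul, map_inv, map_altG, map_altG] at this
  have h := mul_inv_eq_one.mp this
  simpa [altG, artinA, artinB, PresentedGroup.of, mul_assoc] using h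

lemma delta_eq : Δ = a * (b * a) := by simp [artinDelta, altG]

lemma delta_mul_a : Δ * a = b * Δ := by
  rw [delta_eq]; conv_lhs => rw [braid_rel]
  simp [mul_assoc]

lemma delta_mul_b : Δ * b = a * Δ := by
  rw [delta_eq]; simp only [mul_assoc]; rw [← braid_rel]

lemma a_mul_dinv : a * Δ⁻¹ = Δ⁻¹ * b := by
  rw [mul_inv_eq_iff_eq_mul, mul_assoc, eq_inv_mul_iff_mul_eq]; exact delta_mul_a

lemma b_mul_dinv : b * Δ⁻¹ = Δ⁻¹ * a := by
  rw [mul_inv_eq_iff_eq_mul, mul_assoc, eq_inv_mul_iff_mul_eq]; exact delta_mul_b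

lemma a_mem : a ∈ M := Submonoid.subset_closure (by simp)
lemma b_mem : b ∈ M := Submonoid.subset_closure (by simp)
lemma delta_mem : Δ ∈ M := by
  rw [delta_eq]; exact mul_mem a_mem (mul_mem b_mem a_mem)

/-- push a positive word past Δ⁻¹. -/
lemma push (φ : ArtinTwo 3) (hφ : φ ∈ M) :
    ∃ ψ ∈ M, φ * Δ⁻¹ = Δ⁻¹ * ψ := by
  induction hφ using Submonoid.closure_induction with
  | mem x hx =>
    rcases hx with h | h
    · exact ⟨b, b_mem, by rw [h]; exact a_mul_dinv⟩
    · exact ⟨a, a_mem, by rw [h]; exact b_mul_dinv⟩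
  | one => exact ⟨1, one_mem _, by simp⟩
  | mul x y hx hy ihx ihy =>
    obtain ⟨ψy, hψy, hy'⟩ := ihy
    obtain ⟨ψx, hψx, hx'⟩ := ihx
    exact ⟨ψx * ψy, mul_mem hψx hψy, by
      rw [mul_assoc, hy', ← mul_assoc, hx', mul_assoc]⟩

/-- push a positive word past Δ⁻ᵏ. -/
lemma pushk (φ : ArtinTwo 3) (hφ : φ ∈ M) :
    ∀ k : ℕ, ∃ ψ ∈ M, φ * (Δ ^ k)⁻¹ = (Δ ^ k)⁻¹ * ψ := by
  intro k
  induction k with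
  | zero => exact ⟨φ, hφ, by simp⟩
  | succ n ih =>
    obtain ⟨ψ, hψ, h⟩ := ih
    obtain ⟨ψ', hψ', h'⟩ := push ψ hψ
    refine ⟨ψ', hψ', ?_⟩
    rw [pow_succ', mul_inv_rev, ← mul_assoc, h, mul_assoc, h', ← mul_assoc]

end aux

section main
local notation "a" => artinA 3
local notation "b" => artinB 3
local notation "Δ" => artinDelta 3
local notation "M" => Submonoid.closure ({artinA 3, artinB 3} : Set (ArtinTwo 3))

lemma a_inv : (artinA 3)⁻¹ = Δ⁻¹ * (a * b) := by
  rw [eq_inv_mul_iff_mul_eq, mul_inv_eq_iff_eq_mul, mul_assoc]; exact delta_eq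

lemma b_inv : (artinB 3)⁻¹ = Δ⁻¹ * (b * a) := by
  rw [eq_inv_mul_iff_mul_eq, mul_inv_eq_iff_eq_mul, mul_assoc, delta_eq]
  exact braid_rel

/-- in the braid group `B₃ = ⟨a,b | aba = bab⟩`, every element can be
written as `Δ⁻ᵏ φ` with `k ≥ 0` and `φ` a positive word in `a, b`. -/
theorem braid3_deligne_normal_form (g : ArtinTwo 3) :
    ∃ (k : ℕ) (φ : ArtinTwo 3),
      φ ∈ Submonoid.closure ({artinA 3, artinB 3} : Set (ArtinTwo 3)) ∧
      g = ((artinDelta 3) ^ k)⁻¹ * φ := by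
  induction g using PresentedGroup.induction_on with
  | H z =>
    induction z using FreeGroup.induction_on with
    | C1 => exact ⟨0, 1, one_mem _, by simp⟩
    | of x =>
      cases x
      · exact ⟨0, b, b_mem, by rw [pow_zero, inv_one, one_mul]; rfl⟩
      · exact ⟨0, a, a_mem, by rw [pow_zero, inv_one, one_mul]; rfl⟩
    | inv_of x _ =>
      cases x
      · refine ⟨1, b * a, mul_mem b_mem a_mem, ?_⟩
        rw [map_inv, pow_one]
        exact b_inv
      · refine ⟨1, a * b, mul_mem a_mem b_mem, ?_⟩
        rw [map_inv, pow_one]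
        exact a_inv
    | mul z w ihz ihw =>
      obtain ⟨k, φ, hφ, hz⟩ := ihz
      obtain ⟨l, ψ, hψ, hw⟩ := ihw
      obtain ⟨φ', hφ', hp⟩ := pushk φ hφ l
      refine ⟨k + l, φ' * ψ, mul_mem hφ' hψ, ?_⟩
      rw [map_mul, hz, hw, mul_assoc, ← mul_assoc φ, hp, ← mul_assoc, ← mul_assoc,
        ← mul_inv_rev, ← pow_add, add_comm l k, mul_assoc]

end main
end
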